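/- Suppose ε ∈ (0,1), total endowment e = Σ_i e_i, ε' = ε³/e, and for good j we have Σ_i x_{ij} p_j ≥ ε², where x_{ij} = h_{ij} + y_{ij} with h, y ≥ 0. Then the money ε'·Σ_s Σ_{j'} z_{sj'} p_{j'} required to consume oversupplied goods, where Σ_s Σ_{j'} z_{sj'} p_{j'} ≤ e, is at most the money ((ε² + 2ε)Σ_i h_{ij} + ε Σ_i y_{ij})·p_j returned to consumers by one price decrease on good j. In particular the assumption that the required money strictly exceeds the returned money leads to a contradiction. -/
import Mathlib


/-- Arithmetic core of the lemma that `decrease_price` occurs at most once per good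
per iteration: the money required to consume oversupplied goods is at most the money
returned to consumers by one price decrease on good `j`; assuming the contrary leads
to a contradiction. -/
theorem decrease_price_once
    {ι σ κ : Type*} [Fintype ι] [Fintype σ] [Fintype κ]
    (e : ι → ℝ) (E ε ε' : ℝ) (hE : E = ∑ i, e i) (hEpos : 0 < E)
    (hε : 0 < ε) (hε1 : ε < 1) (hε' : ε' = ε ^ 3 / E)
    (h y : ι → κ → ℝ) (x : ι → κ → ℝ) (z : σ → κ → ℝ) (p : κ → ℝ)
    (hh : ∀ i j, 0 ≤ h i j) (hy : ∀ i j, 0 ≤ y i j)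
    (hx : ∀ i j, x i j = h i j + y i j)
    (hp : ∀ j, 0 < p j)
    (hrev : ∑ s, ∑ j', z s j' * p j' ≤ E)
    (hrevpos : 0 ≤ ∑ s, ∑ j', z s j' * p j')
    (j : κ) (hdemand : ε ^ 2 ≤ ∑ i, x i j * p j) :
    (ε' * ∑ s, ∑ j', z s j' * p j'
      ≤ ((ε ^ 2 + 2 * ε) * ∑ i, h i j + ε * ∑ i, y i j) * p j) ∧
    ¬ (((ε ^ 2 + 2 * ε) * ∑ i, h i j + ε * ∑ i, y i j) * p j
        < ε' * ∑ s, ∑ j', z s j' * p j') := by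
  have key : ε' * ∑ s, ∑ j', z s j' * p j'
      ≤ ((ε ^ 2 + 2 * ε) * ∑ i, h i j + ε * ∑ i, y i j) * p j := by
    have hε'pos : 0 ≤ ε' := by
      rw [hε']; positivity
    have h1 : ε' * ∑ s, ∑ j', z s j' * p j' ≤ ε' * E :=
      mul_le_mul_of_nonneg_left hrev hε'pos
    have h2 : ε' * E = ε ^ 3 := by
      rw [hε']; field_simp
    have h3 : ε ^ 3 ≤ ε * (ε ^ 2) := le_of_eq (by ring)
    have h4 : ε * ε ^ 2 ≤ ε * ∑ i, x i j * p j :=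
      mul_le_mul_of_nonneg_left hdemand hε.le
    have h5 : ε * ∑ i, x i j * p j
        = (ε * ∑ i, h i j + ε * ∑ i, y i j) * p j := by
      have hs : ∑ i, x i j * p j = (∑ i, h i j + ∑ i, y i j) * p j := by
        rw [← Finset.sum_mul]
        congr 1
        simp [hx, Finset.sum_add_distrib]
      rw [hs]; ring
    have h6 : (ε * ∑ i, h i j + ε * ∑ i, y i j) * p j
        ≤ ((ε ^ 2 + 2 * ε) * ∑ i, h i j + ε * ∑ i, y i j) * p j := by
      apply mul_le_mul_of_nonneg_right _ (hp j).le
      have hsh : 0 ≤ ∑ i, h i j := Finset.sum_nonneg fun i _ => hh i j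
      nlinarith
    calc ε' * ∑ s, ∑ j', z s j' * p j' ≤ ε' * E := h1
      _ = ε ^ 3 := h2
      _ ≤ ε * ∑ i, x i j * p j := by nlinarith
      _ = (ε * ∑ i, h i j + ε * ∑ i, y i j) * p j := h5
      _ ≤ _ := h6
  exact ⟨key, not_lt.mpr key⟩
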